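/- Let T > 0 and let u : [0,T] × ℝ → ℝ be such that the partial derivatives u_x, u_{xx}, u_t, u_{tx}, u_{txx}, u_{xxx} exist and are continuous, and set m = u − u_{xx}. Suppose m_t + sin(u² − u_x²)·m_x = −2·cos(u² − u_x²)·u_x·m² on [0,T] × ℝ. Let x₀ ∈ ℝ and let q : [0,T] → ℝ be differentiable with q(0) = x₀ and q'(t) = sin(u(t,q(t))² − u_x(t,q(t))²) for all t. Then for all t ∈ [0,T]: m(t, q(t)) = m(0, x₀) · exp(−2·∫₀ᵗ [cos(u² − u_x²)·m·u_x](s, q(s)) ds). In particular, m(t,q(t)) is positive, zero, or negative exactly when m(0,x₀) is positive, zero, or negative, respectively. -/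

import Mathlib

open MeasureTheory Real Set

/-- The convolution `(p*f)(x) = ∫_ℝ (1/2) e^{-|x-y|} f(y) dy` with `p(x) = (1/2)exp(-|x|)`. -/
noncomputable def pConv (f : ℝ → ℝ) (x : ℝ) : ℝ := ∫ y : ℝ, (1/2) * Real.exp (-|x - y|) * f y

/-- `(p₊*f)(x) = (1/2)∫_{-∞}^{x} e^{y-x} f(y) dy`. -/
noncomputable def pPlus (f : ℝ → ℝ) (x : ℝ) : ℝ := (1/2) * ∫ y in Set.Iic x, Real.exp (y - x) * f y

/-- `(p₋*f)(x) = (1/2)∫_{x}^{∞} e^{x-y} f(y) dy`. -/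
noncomputable def pMinus (f : ℝ → ℝ) (x : ℝ) : ℝ := (1/2) * ∫ y in Set.Ici x, Real.exp (x - y) * f y

/-- Spatial partial derivative `∂ₓ` of a function of `(t, x)`. -/
noncomputable def pdx (f : ℝ → ℝ → ℝ) : ℝ → ℝ → ℝ := fun t x => deriv (fun y => f t y) x

/-- Time partial derivative `∂ₜ` of a function of `(t, x)`. -/
noncomputable def pdt (f : ℝ → ℝ → ℝ) : ℝ → ℝ → ℝ := fun t x => deriv (fun s => f s x) t

/-- The momentum density `m = u - u_{xx}`. -/
noncomputable def mF (u : ℝ → ℝ → ℝ) : ℝ → ℝ → ℝ := fun t x => u t x - pdx (pdx u) t x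

/-- The blow-up quantity `M = cos(u² - u_x²) · m · u_x`. -/
noncomputable def MF (u : ℝ → ℝ → ℝ) : ℝ → ℝ → ℝ :=
  fun t x => Real.cos ((u t x) ^ 2 - (pdx u t x) ^ 2) * mF u t x * pdx u t x

/-- Continuous partial derivatives imply Fréchet differentiability (2D real case). -/
lemma hasFDerivAt_of_partials (f ft fx : ℝ → ℝ → ℝ) (a b : ℝ)
    (hft : ∀ s y, HasDerivAt (fun σ => f σ y) (ft s y) s)
    (hfx : ∀ y, HasDerivAt (fun η => f a η) (fx a y) y)
    (hct : ContinuousAt (fun p : ℝ × ℝ => ft p.1 p.2) (a, b))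
    (hcx : ContinuousAt (fun y => fx a y) b) :
    HasFDerivAt (fun p : ℝ × ℝ => f p.1 p.2)
      (ft a b • ContinuousLinearMap.fst ℝ ℝ ℝ + fx a b • ContinuousLinearMap.snd ℝ ℝ ℝ)
      (a, b) := by
  rw [hasFDerivAt_iff_isLittleO_nhds_zero]
  rw [Asymptotics.isLittleO_iff]
  intro c hc
  obtain ⟨δ₁, hδ₁, H1⟩ := Metric.continuousAt_iff.1 hct (c / 2) (by linarith)
  obtain ⟨δ₂, hδ₂, H2⟩ := Metric.continuousAt_iff.1 hcx (c / 2) (by linarith)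
  set δ := min δ₁ δ₂ with hδdef
  have hδ : 0 < δ := lt_min hδ₁ hδ₂
  filter_upwards [Metric.ball_mem_nhds (0 : ℝ × ℝ) hδ] with h hh
  have hnorm : ‖h‖ < δ := by simpa using hh
  have hle1 : |h.1| ≤ ‖h‖ := by simpa using norm_fst_le h
  have hle2 : |h.2| ≤ ‖h‖ := by simpa using norm_snd_le h
  have hh1 : |h.1| < δ := lt_of_le_of_lt hle1 hnorm
  have hh2 : |h.2| < δ := lt_of_le_of_lt hle2 hnorm
  set s := a + h.1 with hs
  set y := b + h.2 with hy
  have hsmem : s ∈ Metric.ball a δ := by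
    simp only [Metric.mem_ball, Real.dist_eq, hs, add_sub_cancel_left]; exact hh1
  have hymem : y ∈ Metric.ball b δ := by
    simp only [Metric.mem_ball, Real.dist_eq, hy, add_sub_cancel_left]; exact hh2
  have T1 : |f s y - f a y - h.1 * ft a b| ≤ c / 2 * |h.1| := by
    have key : ∀ σ ∈ Metric.ball a δ, HasDerivWithinAt (fun σ => f σ y - σ * ft a b)
        (ft σ y - ft a b) (Metric.ball a δ) σ := by
      intro σ _
      have := ((hft σ y).sub ((hasDerivAt_id σ).mul_const (ft a b))).hasDerivWithinAt
        (s := Metric.ball a δ)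
      simpa only [one_mul, id_eq, Pi.sub_def] using this
    have bound : ∀ σ ∈ Metric.ball a δ, ‖ft σ y - ft a b‖ ≤ c / 2 := by
      intro σ hσ
      have hd : dist (σ, y) (a, b) < δ₁ := by
        rw [Prod.dist_eq]
        refine max_lt (lt_of_lt_of_le (Metric.mem_ball.1 hσ) (min_le_left _ _)) ?_
        exact lt_of_lt_of_le (Metric.mem_ball.1 hymem) (min_le_left _ _)
      exact le_of_lt (H1 hd)
    have mvt := (convex_ball a δ).norm_image_sub_le_of_norm_hasDerivWithin_le key bound
      (Metric.mem_ball_self hδ) hsmem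
    have e1 : (f s y - s * ft a b) - (f a y - a * ft a b) = f s y - f a y - h.1 * ft a b := by
      rw [hs]; ring
    have e2 : ‖s - a‖ = |h.1| := by rw [hs]; simp [Real.norm_eq_abs]
    rw [e1, e2] at mvt
    simpa [Real.norm_eq_abs] using mvt
  have T2 : |f a y - f a b - h.2 * fx a b| ≤ c / 2 * |h.2| := by
    have key : ∀ η ∈ Metric.ball b δ, HasDerivWithinAt (fun η => f a η - η * fx a b)
        (fx a η - fx a b) (Metric.ball b δ) η := by
      intro η _
      have := ((hfx η).sub ((hasDerivAt_id η).mul_const (fx a b))).hasDerivWithinAt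
        (s := Metric.ball b δ)
      simpa only [one_mul, id_eq, Pi.sub_def] using this
    have bound : ∀ η ∈ Metric.ball b δ, ‖fx a η - fx a b‖ ≤ c / 2 := by
      intro η hη
      exact le_of_lt (H2 (lt_of_lt_of_le (Metric.mem_ball.1 hη) (min_le_right _ _)))
    have mvt := (convex_ball b δ).norm_image_sub_le_of_norm_hasDerivWithin_le key bound
      (Metric.mem_ball_self hδ) hymem
    have e1 : (f a y - y * fx a b) - (f a b - b * fx a b) = f a y - f a b - h.2 * fx a b := by
      rw [hy]; ring
    have e2 : ‖y - b‖ = |h.2| := by rw [hy]; simp [Real.norm_eq_abs]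
    rw [e1, e2] at mvt
    simpa [Real.norm_eq_abs] using mvt
  have expand : f (a + h.1) (b + h.2) - f a b
      - (ft a b • ContinuousLinearMap.fst ℝ ℝ ℝ + fx a b • ContinuousLinearMap.snd ℝ ℝ ℝ) h
      = (f s y - f a y - h.1 * ft a b) + (f a y - f a b - h.2 * fx a b) := by
    simp only [ContinuousLinearMap.add_apply, ContinuousLinearMap.coe_smul',
      Pi.smul_apply, ContinuousLinearMap.coe_fst', ContinuousLinearMap.coe_snd',
      smul_eq_mul, hs, hy]
    ring
  rw [Real.norm_eq_abs]
  simp only [Prod.fst_add, Prod.snd_add]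
  rw [expand]
  have habs : |(f s y - f a y - h.1 * ft a b) + (f a y - f a b - h.2 * fx a b)|
      ≤ c / 2 * |h.1| + c / 2 * |h.2| := (abs_add_le _ _).trans (add_le_add T1 T2)
  nlinarith [habs, hle1, hle2, abs_nonneg h.1, abs_nonneg h.2]

/-- Chain rule along a curve, from continuous partial derivatives. -/
lemma hasDerivAt_comp_partials (f ft fx : ℝ → ℝ → ℝ) (q : ℝ → ℝ) (v a : ℝ)
    (hq : HasDerivAt q v a)
    (hft : ∀ s y, HasDerivAt (fun σ => f σ y) (ft s y) s)
    (hfx : ∀ s y, HasDerivAt (fun η => f s η) (fx s y) y)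
    (hct : Continuous (fun p : ℝ × ℝ => ft p.1 p.2))
    (hcx : Continuous (fun p : ℝ × ℝ => fx p.1 p.2)) :
    HasDerivAt (fun t => f t (q t)) (ft a (q a) + v * fx a (q a)) a := by
  have h1 : HasDerivAt (fun t => ((t, q t) : ℝ × ℝ)) (1, v) a := (hasDerivAt_id a).prodMk hq
  have hcx' : ContinuousAt (fun y => fx a y) (q a) :=
    (hcx.comp (Continuous.prodMk_right a)).continuousAt
  have h2 := (hasFDerivAt_of_partials f ft fx a (q a) hft (hfx a) hct.continuousAt hcx')
  have h3 := h2.comp_hasDerivAt a h1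
  have : (ft a (q a) • ContinuousLinearMap.fst ℝ ℝ ℝ
      + fx a (q a) • ContinuousLinearMap.snd ℝ ℝ ℝ) ((1 : ℝ), v)
      = ft a (q a) + v * fx a (q a) := by
    simp [smul_eq_mul]; ring
  rw [this] at h3
  exact h3

theorem stmt11 (T : ℝ) (hT : 0 < T) (u : ℝ → ℝ → ℝ)
    -- existence of the partial derivatives u_x, u_xx, u_xxx, u_t, u_tx, u_txx
    (hux : ∀ t : ℝ, Differentiable ℝ (fun y => u t y))
    (huxx : ∀ t : ℝ, Differentiable ℝ (fun y => pdx u t y))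
    (huxxx : ∀ t : ℝ, Differentiable ℝ (fun y => pdx (pdx u) t y))
    (hut : ∀ x : ℝ, Differentiable ℝ (fun s => u s x))
    (hutx : ∀ x : ℝ, Differentiable ℝ (fun s => pdx u s x))
    (hutxx : ∀ x : ℝ, Differentiable ℝ (fun s => pdx (pdx u) s x))
    -- continuity of u and of these partial derivatives
    (hc : Continuous (Function.uncurry u))
    (hcx : Continuous (Function.uncurry (pdx u)))
    (hcxx : Continuous (Function.uncurry (pdx (pdx u))))
    (hcxxx : Continuous (Function.uncurry (pdx (pdx (pdx u)))))
    (hct : Continuous (Function.uncurry (pdt u)))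
    (hctx : Continuous (Function.uncurry (pdt (pdx u))))
    (hctxx : Continuous (Function.uncurry (pdt (pdx (pdx u)))))
    -- the sine-mCH equation: m_t + sin(u² - u_x²)·m_x = -2·cos(u² - u_x²)·u_x·m²
    (heq : ∀ t ∈ Set.Icc (0 : ℝ) T, ∀ x : ℝ,
      pdt (mF u) t x + Real.sin ((u t x) ^ 2 - (pdx u t x) ^ 2) * pdx (mF u) t x
        = -2 * Real.cos ((u t x) ^ 2 - (pdx u t x) ^ 2) * pdx u t x * (mF u t x) ^ 2)
    (x₀ : ℝ) (q : ℝ → ℝ) (hq0 : q 0 = x₀)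
    (hq : ∀ t ∈ Set.Icc (0 : ℝ) T,
      HasDerivAt q (Real.sin ((u t (q t)) ^ 2 - (pdx u t (q t)) ^ 2)) t) :
    ∀ t ∈ Set.Icc (0 : ℝ) T,
      mF u t (q t) = mF u 0 x₀ * Real.exp (-2 * ∫ s in (0 : ℝ)..t,
          Real.cos ((u s (q s)) ^ 2 - (pdx u s (q s)) ^ 2) * mF u s (q s) * pdx u s (q s)) ∧
      (0 < mF u 0 x₀ → 0 < mF u t (q t)) ∧
      (mF u 0 x₀ = 0 → mF u t (q t) = 0) ∧
      (mF u 0 x₀ < 0 → mF u t (q t) < 0) := by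
  -- partial derivatives of m
  have hpdtm : pdt (mF u) = fun t x => pdt u t x - pdt (pdx (pdx u)) t x := by
    funext t x
    show deriv (fun s => u s x - pdx (pdx u) s x) t = _
    rw [deriv_fun_sub (hut x t) (hutxx x t)]
    rfl
  have hpdxm : pdx (mF u) = fun t x => pdx u t x - pdx (pdx (pdx u)) t x := by
    funext t x
    show deriv (fun y => u t y - pdx (pdx u) t y) x = _
    rw [deriv_fun_sub (hux t x) (huxxx t x)]
    rfl
  have hmt : ∀ s y, HasDerivAt (fun σ => mF u σ y) (pdt (mF u) s y) s := by
    intro s y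
    rw [hpdtm]
    have h1 : HasDerivAt (fun σ => u σ y) (pdt u s y) s := ((hut y) s).hasDerivAt
    have h2 : HasDerivAt (fun σ => pdx (pdx u) σ y) (pdt (pdx (pdx u)) s y) s :=
      ((hutxx y) s).hasDerivAt
    exact h1.sub h2
  have hmx : ∀ s y, HasDerivAt (fun η => mF u s η) (pdx (mF u) s y) y := by
    intro s y
    rw [hpdxm]
    have h1 : HasDerivAt (fun η => u s η) (pdx u s y) y := ((hux s) y).hasDerivAt
    have h2 : HasDerivAt (fun η => pdx (pdx u) s η) (pdx (pdx (pdx u)) s y) y :=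
      ((huxxx s) y).hasDerivAt
    exact h1.sub h2
  have hcft : Continuous (fun p : ℝ × ℝ => pdt (mF u) p.1 p.2) := by
    simp only [hpdtm]; exact hct.sub hctxx
  have hcfx : Continuous (fun p : ℝ × ℝ => pdx (mF u) p.1 p.2) := by
    simp only [hpdxm]; exact hcx.sub hcxxx
  -- continuity helpers
  have hcu : Continuous (fun p : ℝ × ℝ => u p.1 p.2) := hc
  have hcux : Continuous (fun p : ℝ × ℝ => pdx u p.1 p.2) := hcx
  have hcm : Continuous (fun p : ℝ × ℝ => mF u p.1 p.2) := hc.sub hcxx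
  have hcM : Continuous (fun p : ℝ × ℝ => MF u p.1 p.2) := by
    refine Continuous.mul (Continuous.mul ?_ hcm) hcux
    exact Real.continuous_cos.comp ((hcu.pow 2).sub (hcux.pow 2))
  -- the truncated characteristic
  have hqcont : ContinuousOn q (Icc 0 T) := fun t htt =>
    ((hq t htt).continuousAt).continuousWithinAt
  have hccl : Continuous (fun s : ℝ => max 0 (min s T)) :=
    continuous_const.max (continuous_id.min continuous_const)
  have hclmem : ∀ s : ℝ, max 0 (min s T) ∈ Icc (0 : ℝ) T := fun s =>
    ⟨le_max_left _ _, max_le hT.le (min_le_right _ _)⟩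
  have hqt : Continuous (fun s : ℝ => q (max 0 (min s T))) :=
    hqcont.comp_continuous hccl hclmem
  have hceq : ∀ t ∈ Icc (0:ℝ) T, max 0 (min t T) = t := fun t htt => by
    rw [min_eq_left htt.2, max_eq_right htt.1]
  obtain ⟨h, hhdef⟩ : ∃ h : ℝ → ℝ, h = fun s => MF u s (q (max 0 (min s T))) := ⟨_, rfl⟩
  have hh_cont : Continuous h := by
    rw [hhdef]
    have hpair : Continuous (fun s : ℝ => ((s, q (max 0 (min s T))) : ℝ × ℝ)) :=
      continuous_id.prodMk hqt
    show Continuous ((fun p : ℝ × ℝ => MF u p.1 p.2) ∘ fun s : ℝ => (s, q (max 0 (min s T))))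
    exact hcM.comp hpair
  obtain ⟨I, hIdef⟩ : ∃ I : ℝ → ℝ, I = fun t => ∫ s in (0:ℝ)..t, h s := ⟨_, rfl⟩
  have hI : ∀ t, HasDerivAt I (h t) t := by
    intro t
    rw [hIdef]
    exact (hh_cont.integral_hasStrictDerivAt 0 t).hasDerivAt
  obtain ⟨E, hEdef⟩ : ∃ E : ℝ → ℝ, E = fun t => Real.exp (2 * I t) := ⟨_, rfl⟩
  have hE : ∀ t, HasDerivAt E (Real.exp (2 * I t) * (2 * h t)) t := by
    intro t
    rw [hEdef]
    exact ((hI t).const_mul 2).exp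
  obtain ⟨F, hFdef⟩ : ∃ F : ℝ → ℝ, F = fun t => mF u t (q t) := ⟨_, rfl⟩
  have hhval : ∀ t ∈ Icc (0:ℝ) T, h t = MF u t (q t) := fun t htt => by
    simp only [hhdef]; rw [hceq t htt]
  have hF : ∀ t ∈ Icc (0:ℝ) T, HasDerivAt F (-2 * h t * F t) t := by
    intro t htt
    have hd := hasDerivAt_comp_partials (mF u) (pdt (mF u)) (pdx (mF u)) q
      (Real.sin ((u t (q t)) ^ 2 - (pdx u t (q t)) ^ 2)) t (hq t htt) hmt hmx hcft hcfx
    have he := heq t htt (q t)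
    have hval : pdt (mF u) t (q t)
        + Real.sin ((u t (q t)) ^ 2 - (pdx u t (q t)) ^ 2) * pdx (mF u) t (q t)
        = -2 * h t * mF u t (q t) := by
      rw [he, hhval t htt, MF]
      ring
    simp only [hFdef]
    rw [← hval]
    exact hd
  obtain ⟨G, hGdef⟩ : ∃ G : ℝ → ℝ, G = fun t => F t * E t := ⟨_, rfl⟩
  have hG : ∀ t ∈ Icc (0:ℝ) T, HasDerivAt G 0 t := by
    intro t htt
    rw [hGdef]
    have hd := (hF t htt).mul (hE t)
    have hzero : -2 * h t * F t * E t + F t * (Real.exp (2 * I t) * (2 * h t)) = 0 := by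
      simp only [hEdef]
      ring
    rw [hzero] at hd
    exact hd
  have hFc : ContinuousOn F (Icc (0:ℝ) T) := by
    rw [hFdef]
    show ContinuousOn ((fun p : ℝ × ℝ => mF u p.1 p.2) ∘ fun t : ℝ => (t, q t)) (Icc 0 T)
    exact hcm.comp_continuousOn (continuousOn_id.prodMk hqcont)
  have hIc : Continuous I := continuous_iff_continuousAt.2 fun t => (hI t).continuousAt
  have hEc : Continuous E := by
    rw [hEdef]; exact Real.continuous_exp.comp (continuous_const.mul hIc)
  have hGc : ContinuousOn G (Icc (0:ℝ) T) := by
    rw [hGdef]; exact hFc.mul hEc.continuousOn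
  have hconst := constant_of_has_deriv_right_zero hGc
    (fun x hx => (hG x (Ico_subset_Icc_self hx)).hasDerivWithinAt)
  have hI0 : I 0 = 0 := by simp only [hIdef]; simp
  have hG0 : G 0 = mF u 0 x₀ := by
    simp only [hGdef, hEdef, hFdef, hI0, hq0]
    simp
  intro t htt
  have hGt : F t * E t = mF u 0 x₀ := by
    have hc0 := hconst t htt
    rw [hG0] at hc0
    rw [← hc0, hGdef]
  have hIeq : I t = ∫ s in (0:ℝ)..t,
      Real.cos ((u s (q s)) ^ 2 - (pdx u s (q s)) ^ 2) * mF u s (q s) * pdx u s (q s) := by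
    rw [hIdef]
    refine intervalIntegral.integral_congr ?_
    intro s hs
    have hs' : s ∈ Icc (0:ℝ) T := by
      rw [Set.uIcc_of_le htt.1] at hs
      exact ⟨hs.1, hs.2.trans htt.2⟩
    rw [hhval s hs', MF]
  have hFt : F t = mF u t (q t) := by rw [hFdef]
  have hmain : mF u t (q t) = mF u 0 x₀ * Real.exp (-2 * I t) := by
    rw [← hFt]
    have h2 : Real.exp (-2 * I t) * Real.exp (2 * I t) = 1 := by
      rw [← Real.exp_add]; ring_nf; exact Real.exp_zero
    calc F t = F t * (Real.exp (2 * I t) * Real.exp (-2 * I t)) := by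
            rw [mul_comm (Real.exp (2 * I t)), h2, mul_one]
      _ = (F t * E t) * Real.exp (-2 * I t) := by simp only [hEdef]; ring
      _ = mF u 0 x₀ * Real.exp (-2 * I t) := by rw [hGt]
  rw [← hIeq]
  refine ⟨hmain, ?_, ?_, ?_⟩
  · intro hpos; rw [hmain]; positivity
  · intro hzero; rw [hmain, hzero, zero_mul]
  · intro hneg; rw [hmain]
    exact mul_neg_of_neg_of_pos hneg (Real.exp_pos _)
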